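/- Let n ≥ 1, let k₀, …, k_n ≥ 2, and let N be a natural number with 2·N > 2 + ∏_{m ≤ n} k_m and 3·N > 3·((max_{m ≤ n} k_m) − 1) + ∏_{m ≤ n} k_m. Then there do not exist continuous maps Φ_m : (ℕ → Fin N) → (ℕ → Fin k_m) for each m ≤ n together with a function ψ : (∀ m ≤ n, Fin k_m) → Fin N such that for every c : ℕ → Fin N and every tuple (a₀, …, a_n) such that each a_m occurs infinitely often in Φ_m(c), the color ψ(a₀, …, a_n) occurs infinitely often in c. (This is the non-reduction RT¹_N ≰_W ∏_{m ≤ n} RT¹_{k_m} for N > max{(2 + ∏ k_m)/2, max k_m − 1 + (∏ k_m)/3}.) -/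

import Mathlib

def gstr {N : ℕ} (T : List (Fin N) → Fin N → ℕ → ℕ) (vi : ℕ → Fin N) : ℕ → List (Fin N)
  | 0 => []
  | i+1 => List.ofFn (fun j : Fin (max (T (gstr T vi i) (vi i) (gstr T vi i).length)
      ((gstr T vi i).length + 1)) => (gstr T vi i).getD j (vi i))

lemma gstr_len {N : ℕ} (T : List (Fin N) → Fin N → ℕ → ℕ) (vi : ℕ → Fin N) (i : ℕ) :
    (gstr T vi (i+1)).length = max (T (gstr T vi i) (vi i) (gstr T vi i).length)
      ((gstr T vi i).length + 1) := by
  simp [gstr]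

lemma gstr_le_len {N : ℕ} (T : List (Fin N) → Fin N → ℕ → ℕ) (vi : ℕ → Fin N) (i : ℕ) :
    i ≤ (gstr T vi i).length := by
  induction i with
  | zero => simp
  | succ i ih => rw [gstr_len]; omega

lemma gstr_succ_getD {N : ℕ} (T : List (Fin N) → Fin N → ℕ → ℕ) (vi : ℕ → Fin N) (i j : ℕ)
    (d : Fin N) (h : j < (gstr T vi (i+1)).length) :
    (gstr T vi (i+1)).getD j d = (gstr T vi i).getD j (vi i) := by
  rw [List.getD_eq_getElem _ _ h]
  have h' : j < (gstr T vi (i+1)).length := h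
  rw [gstr_len] at h'
  show (gstr T vi (i+1)).get ⟨j, h⟩ = _
  simp only [gstr]
  rw [List.get_ofFn]
  simp


lemma gstr_len_mono {N : ℕ} (T : List (Fin N) → Fin N → ℕ → ℕ) (vi : ℕ → Fin N) (i p : ℕ) :
    (gstr T vi i).length ≤ (gstr T vi (i+p)).length := by
  induction p with
  | zero => rfl
  | succ p ih =>
    have h2 : (gstr T vi (i+p)).length < (gstr T vi (i+p+1)).length := by
      rw [gstr_len]; omega
    calc (gstr T vi i).length ≤ _ := ih
      _ ≤ (gstr T vi (i+(p+1))).length := by rw [show i+(p+1) = (i+p)+1 from rfl]; omega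

lemma gstr_stable {N : ℕ} (T : List (Fin N) → Fin N → ℕ → ℕ) (vi : ℕ → Fin N) (i p j : ℕ)
    (d d' : Fin N) (h : j < (gstr T vi i).length) :
    (gstr T vi (i+p)).getD j d = (gstr T vi i).getD j d' := by
  have key : ∀ p d, (gstr T vi (i+p)).getD j d = (gstr T vi i).getD j d' := by
    intro p
    induction p with
    | zero =>
      intro d
      simp only [Nat.add_zero]
      rw [List.getD_eq_getElem _ _ h, List.getD_eq_getElem _ _ h]
    | succ p ih =>
      intro d
      have hlen2 : j < (gstr T vi (i+p+1)).length :=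
        lt_of_lt_of_le (lt_of_lt_of_le h (gstr_len_mono T vi i p)) (gstr_len_mono T vi (i+p) 1)
      rw [show i+(p+1) = (i+p)+1 from rfl, gstr_succ_getD T vi (i+p) j d hlen2]
      exact ih _
  exact key p d

lemma gstr_colors {N : ℕ} (T : List (Fin N) → Fin N → ℕ → ℕ) (vi : ℕ → Fin N) :
    ∀ (i j : ℕ) (d : Fin N), j < (gstr T vi i).length →
      ∃ q, (gstr T vi i).getD j d = vi q := by
  intro i
  induction i with
  | zero => intro j d h; simp [gstr] at h
  | succ i ih =>
    intro j d h
    rw [gstr_succ_getD T vi i j d h]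
    by_cases hj : j < (gstr T vi i).length
    · exact ih j _ hj
    · exact ⟨i, List.getD_eq_default _ _ (by omega)⟩

lemma loc_aux {N K : ℕ} (f : (ℕ → Fin N) → Fin K) (hf : Continuous f)
    (c : ℕ → Fin N) : ∃ t, ∀ c', (∀ i < t, c' i = c i) → f c' = f c := by
  have hU : IsOpen (f ⁻¹' {f c}) := (isOpen_discrete _).preimage hf
  rw [isOpen_pi_iff] at hU
  obtain ⟨I, u, hIu, hsub⟩ := hU c rfl
  refine ⟨I.sup id + 1, fun c' hc' => ?_⟩
  have : c' ∈ (I : Set ℕ).pi u := by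
    intro i hi
    have : c' i = c i := hc' i (Nat.lt_succ_of_le (Finset.le_sup (f := id) hi))
    rw [this]; exact (hIu i hi).2
  exact hsub this

lemma force_aux {n N : ℕ} {k : Fin (n+1) → ℕ}
    (Φ : ∀ m : Fin (n + 1), (ℕ → Fin N) → (ℕ → Fin (k m)))
    (ψ : (∀ m, Fin (k m)) → Fin N)
    (hΦ : ∀ m, Continuous (Φ m))
    (hψ : ∀ (c : ℕ → Fin N) (a : ∀ m, Fin (k m)),
        (∀ m, {x | Φ m c x = a m}.Infinite) → {x | c x = ψ a}.Infinite)
    (σ : List (Fin N)) (v : Fin N) (b : ℕ) :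
    ∃ (t : ℕ) (a : ∀ m, Fin (k m)) (x : ∀ m, ℕ),
      ψ a = v ∧ (∀ m, b < x m) ∧
      ∀ c : ℕ → Fin N, (∀ i < t, c i = σ.getD i v) → ∀ m, Φ m c (x m) = a m := by
  set c' : ℕ → Fin N := fun i => σ.getD i v with hc'
  have ha : ∀ m, ∃ am : Fin (k m), {x | Φ m c' x = am}.Infinite := by
    intro m
    obtain ⟨y, hy⟩ := Finite.exists_infinite_fiber (Φ m c')
    exact ⟨y, Set.infinite_coe_iff.mp hy⟩
  choose a hainf using ha
  have hψa : ψ a = v := by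
    by_contra hne
    refine (hψ c' a hainf) ?_
    refine Set.Finite.subset (Set.finite_Iio σ.length) ?_
    intro x hx
    simp only [Set.mem_setOf_eq] at hx
    by_contra hge
    simp only [Set.mem_Iio, not_lt] at hge
    rw [hc'] at hx
    simp only [List.getD_eq_default _ _ hge] at hx
    exact hne hx.symm
  have hx : ∀ m, ∃ xm, Φ m c' xm = a m ∧ b < xm := by
    intro m
    obtain ⟨xm, hxm, hgt⟩ := (hainf m).exists_gt b
    exact ⟨xm, hxm, hgt⟩
  choose x hxa hxgt using hx
  have hloc : ∀ m, ∃ t, ∀ c'', (∀ i < t, c'' i = c' i) → Φ m c'' (x m) = Φ m c' (x m) :=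
    fun m => loc_aux (fun c => Φ m c (x m)) ((continuous_apply (x m)).comp (hΦ m)) c'
  choose t ht using hloc
  refine ⟨Finset.univ.sup t, a, x, hψa, hxgt, fun c hc m => ?_⟩
  rw [ht m c (fun i hi => hc i (lt_of_lt_of_le hi (Finset.le_sup (Finset.mem_univ m))))]
  exact hxa m

lemma unbdd_infinite {s : Set ℕ} (h : ∀ a, ∃ b ∈ s, a < b) : s.Infinite := by
  intro hfin
  obtain ⟨B, hB⟩ := hfin.bddAbove
  obtain ⟨b, hb, hb2⟩ := h B
  exact absurd (hB hb) (by omega)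

lemma c_agree {N : ℕ} (T : List (Fin N) → Fin N → ℕ → ℕ) (vi : ℕ → Fin N) (v : Fin N)
    (i j : ℕ) (d : Fin N) (h : j < (gstr T vi i).length) :
    (gstr T vi (j+1)).getD j v = (gstr T vi i).getD j d := by
  rcases le_total (j+1) i with hle | hle
  · obtain ⟨p, rfl⟩ := Nat.le.dest hle
    exact (gstr_stable T vi (j+1) p j d v
      (lt_of_lt_of_le (Nat.lt_succ_self j) (gstr_le_len T vi (j+1)))).symm
  · obtain ⟨p, hp⟩ := Nat.le.dest hle
    rw [← hp]
    exact gstr_stable T vi i p j v d h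

lemma pair_aux {n N : ℕ} {k : Fin (n+1) → ℕ}
    (Φ : ∀ m : Fin (n + 1), (ℕ → Fin N) → (ℕ → Fin (k m)))
    (ψ : (∀ m, Fin (k m)) → Fin N)
    (hΦ : ∀ m, Continuous (Φ m))
    (hψ : ∀ (c : ℕ → Fin N) (a : ∀ m, Fin (k m)),
        (∀ m, {x | Φ m c x = a m}.Infinite) → {x | c x = ψ a}.Infinite)
    (v w : Fin N) :
    ∃ α β : ∀ m, Fin (k m), ψ α = v ∧ ψ β = w ∧
      ∀ γ : ∀ m, Fin (k m), (∀ m, γ m = α m ∨ γ m = β m) → ψ γ = v ∨ ψ γ = w := by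
  choose T A X hA hX hF using force_aux Φ ψ hΦ hψ
  set vi : ℕ → Fin N := fun i => if Even i then v else w with hvi
  set g : ℕ → List (Fin N) := gstr T vi with hg
  set c : ℕ → Fin N := fun x => (g (x+1)).getD x v with hc
  have hforce : ∀ i m,
      Φ m c (X (g i) (vi i) (g i).length m) = A (g i) (vi i) (g i).length m := by
    intro i m
    apply hF (g i) (vi i) (g i).length c ?_ m
    intro j hj
    have hTle : T (g i) (vi i) (g i).length ≤ (g (i+1)).length := by
      rw [hg, gstr_len]; exact le_max_left _ _
    have hj1 : j < (g (i+1)).length := lt_of_lt_of_le hj hTle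
    calc c j = (g (i+1)).getD j v := c_agree T vi v (i+1) j v hj1
      _ = (g i).getD j (vi i) := gstr_succ_getD T vi i j v hj1
  have hcol : ∀ x, c x = v ∨ c x = w := by
    intro x
    have hx : x < (g (x+1)).length :=
      lt_of_lt_of_le (Nat.lt_succ_self x) (gstr_le_len T vi (x+1))
    obtain ⟨q, hq⟩ := gstr_colors T vi (x+1) x v hx
    show (g (x+1)).getD x v = v ∨ (g (x+1)).getD x v = w
    rw [← hg] at hq
    rw [hq, hvi]
    by_cases hq' : Even q <;> simp [hq']
  have main : ∀ (u : Fin N) (e : ℕ → ℕ), (∀ j, vi (e j) = u) → (∀ j, j ≤ e j) →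
      ∃ α, ψ α = u ∧ ∀ m, {x | Φ m c x = α m}.Infinite := by
    intro u e hu he
    obtain ⟨α, hα⟩ := Finite.exists_infinite_fiber
      (fun j => A (g (e j)) (vi (e j)) ((g (e j)).length))
    have hαinf := Set.infinite_coe_iff.mp hα
    obtain ⟨j₀, hj₀⟩ := hαinf.nonempty
    have hj₀' : A (g (e j₀)) (vi (e j₀)) ((g (e j₀)).length) = α := hj₀
    have hψα : ψ α = u := by rw [← hj₀', hA, hu]
    refine ⟨α, hψα, fun m => unbdd_infinite fun B => ?_⟩
    obtain ⟨j, hjmem, hjB⟩ := hαinf.exists_gt B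
    have hjmem' : A (g (e j)) (vi (e j)) ((g (e j)).length) = α := hjmem
    refine ⟨X (g (e j)) (vi (e j)) ((g (e j)).length) m, ?_, ?_⟩
    · show Φ m c _ = α m
      rw [hforce (e j) m, hjmem']
    · have h1 := hX (g (e j)) (vi (e j)) ((g (e j)).length) m
      have h2 := gstr_le_len T vi (e j)
      have h3 := he j
      rw [← hg] at h2
      omega
  obtain ⟨α, hψα, hαinf⟩ := main v (fun j => 2*j)
    (by intro j; simp only [hvi]; rw [if_pos (even_two_mul j)]) (by intro j; show j ≤ 2*j; omega)
  obtain ⟨β, hψβ, hβinf⟩ := main w (fun j => 2*j+1)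
    (by intro j
        have hodd : ¬ Even (2*j+1) := by simp [Nat.even_add_one]
        simp only [hvi]; rw [if_neg hodd]) (by intro j; show j ≤ 2*j+1; omega)
  refine ⟨α, β, hψα, hψβ, fun γ hγ => ?_⟩
  have hγinf : ∀ m, {x | Φ m c x = γ m}.Infinite := by
    intro m; rcases hγ m with h | h <;> rw [h]
    exacts [hαinf m, hβinf m]
  obtain ⟨x, hx⟩ := (hψ c γ hγinf).nonempty
  have hx' : c x = ψ γ := hx
  rcases hcol x with h | h
  · left; rw [← hx', h]
  · right; rw [← hx', h]


lemma combo {n N : ℕ} {k : Fin (n+1) → ℕ} (hk : ∀ m, 2 ≤ k m)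
    (hN1 : 2 + ∏ m, k m < 2 * N)
    (hN2 : 3 * (Finset.univ.sup k - 1) + ∏ m, k m < 3 * N)
    (ψ : (∀ m, Fin (k m)) → Fin N)
    (hpair : ∀ v w : Fin N, ∃ α β, ψ α = v ∧ ψ β = w ∧
      ∀ γ : ∀ m, Fin (k m), (∀ m, γ m = α m ∨ γ m = β m) → ψ γ = v ∨ ψ γ = w) :
    False := by
  classical
  set F : Fin N → Finset (∀ m, Fin (k m)) :=
    fun z => Finset.univ.filter (fun a => ψ a = z) with hF
  have hmemF : ∀ z (a : ∀ m, Fin (k m)), a ∈ F z ↔ ψ a = z := by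
    intro z a; simp [hF]
  have hFne : ∀ z, (F z).Nonempty := by
    intro z
    obtain ⟨α, _, hα, _⟩ := hpair z z
    exact ⟨α, (hmemF z α).mpr hα⟩
  have hsum : ∑ z, (F z).card = ∏ m, k m := by
    have := Finset.card_eq_sum_card_fiberwise
      (f := ψ) (s := Finset.univ) (t := Finset.univ) (fun x _ => Finset.mem_univ _)
    rw [← this]
    simp [Fintype.card_pi]
  -- distance-1 lemma
  have hdist : ∀ (v z : Fin N) (α : ∀ m, Fin (k m)), v ≠ z → F v = {α} → (F z).card ≤ 2 →
      ∃ β ∈ F z, ∃ m, α m ≠ β m ∧ ∀ j, j ≠ m → α j = β j := by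
    intro v z α hvz hFv hFz
    obtain ⟨α', β, hα', hβ, hcube⟩ := hpair v z
    have hα'mem : α' ∈ F v := (hmemF v α').mpr hα'
    rw [hFv, Finset.mem_singleton] at hα'mem
    subst hα'mem
    have hβmem : β ∈ F z := (hmemF z β).mpr hβ
    have hαβ : α' ≠ β := by
      intro h; rw [h, hβ] at hα'; exact hvz hα'.symm
    obtain ⟨m₁, hm₁⟩ : ∃ m, α' m ≠ β m := by
      by_contra h; push_neg at h; exact hαβ (funext h)
    refine ⟨β, hβmem, m₁, hm₁, ?_⟩
    by_contra h
    push_neg at h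
    obtain ⟨m₂, hm₂ne, hm₂⟩ := h
    set γ₁ := Function.update α' m₁ (β m₁) with hγ₁
    set γ₂ := Function.update α' m₂ (β m₂) with hγ₂
    have hγ₁m₁ : γ₁ m₁ = β m₁ := by simp [hγ₁]
    have hγ₂m₂ : γ₂ m₂ = β m₂ := by simp [hγ₂]
    have hγ₁j : ∀ j, j ≠ m₁ → γ₁ j = α' j := by
      intro j hj; simp [hγ₁, Function.update_of_ne hj]
    have hγ₂j : ∀ j, j ≠ m₂ → γ₂ j = α' j := by
      intro j hj; simp [hγ₂, Function.update_of_ne hj]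
    have hγ₁mem : γ₁ ∈ F v ∪ F z := by
      have := hcube γ₁ (fun m => by
        by_cases hm : m = m₁
        · subst hm; right; exact hγ₁m₁
        · left; exact hγ₁j m hm)
      rcases this with h | h
      · exact Finset.mem_union_left _ ((hmemF v γ₁).mpr h)
      · exact Finset.mem_union_right _ ((hmemF z γ₁).mpr h)
    have hγ₂mem : γ₂ ∈ F v ∪ F z := by
      have := hcube γ₂ (fun m => by
        by_cases hm : m = m₂
        · subst hm; right; exact hγ₂m₂
        · left; exact hγ₂j m hm)
      rcases this with h | h
      · exact Finset.mem_union_left _ ((hmemF v γ₂).mpr h)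
      · exact Finset.mem_union_right _ ((hmemF z γ₂).mpr h)
    have hαmem : α' ∈ F v ∪ F z := Finset.mem_union_left _ (by rw [hFv]; simp)
    have hβmem2 : β ∈ F v ∪ F z := Finset.mem_union_right _ hβmem
    -- distinctness
    have d1 : α' ≠ γ₁ := fun h => hm₁ (by rw [h, hγ₁m₁])
    have d2 : α' ≠ γ₂ := fun h => hm₂ (by rw [h, hγ₂m₂])
    have d3 : α' ≠ β := hαβ
    have d4 : β ≠ γ₁ := by
      intro h
      have h1 : γ₁ m₂ = α' m₂ := hγ₁j m₂ hm₂ne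
      rw [← h] at h1
      exact hm₂ h1.symm
    have d5 : β ≠ γ₂ := by
      intro h
      have h1 : γ₂ m₁ = α' m₁ := hγ₂j m₁ (Ne.symm hm₂ne)
      rw [← h] at h1
      exact hm₁ h1.symm
    have d6 : γ₁ ≠ γ₂ := by
      intro h
      have h1 := congrFun h m₁
      rw [hγ₁m₁, hγ₂j m₁ (Ne.symm hm₂ne)] at h1
      exact hm₁ h1.symm
    have hc4 : ({α', β, γ₁, γ₂} : Finset (∀ m, Fin (k m))).card = 4 := by
      rw [Finset.card_insert_of_notMem (by simp [d3, d1, d2]),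
        Finset.card_insert_of_notMem (by simp [d4, d5]),
        Finset.card_insert_of_notMem (by simp [d6]), Finset.card_singleton]
    have hsub : ({α', β, γ₁, γ₂} : Finset (∀ m, Fin (k m))) ⊆ F v ∪ F z := by
      intro x hx
      simp only [Finset.mem_insert, Finset.mem_singleton] at hx
      rcases hx with rfl | rfl | rfl | rfl
      exacts [hαmem, hβmem2, hγ₁mem, hγ₂mem]
    have h1 := Finset.card_le_card hsub
    have h2 := Finset.card_union_le (F v) (F z)
    have h3 : (F v).card = 1 := by rw [hFv]; simp
    omega
  -- counting
  set SS := Finset.univ.filter (fun z : Fin N => (F z).card = 1) with hSS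
  set BB := Finset.univ.filter (fun z : Fin N => (F z).card ≤ 2) with hBB
  have hcard1 : ∀ z : Fin N, 1 ≤ (F z).card := fun z => Finset.card_pos.mpr (hFne z)
  have hi : 2 * N ≤ (∏ m, k m) + SS.card := by
    have key : ∀ z : Fin N, 2 ≤ (F z).card + (if (F z).card = 1 then 1 else 0) := by
      intro z
      have := hcard1 z
      split_ifs with h <;> omega
    have hle : ∑ _z : Fin N, (2:ℕ) ≤ ∑ z, ((F z).card + if (F z).card = 1 then 1 else 0) :=
      Finset.sum_le_sum (fun z _ => key z)
    have hbool : ∑ z : Fin N, (if (F z).card = 1 then (1:ℕ) else 0) = SS.card := by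
      rw [hSS, Finset.card_filter]
    rw [Finset.sum_add_distrib, hbool, Finset.sum_const] at hle
    simp only [smul_eq_mul, Finset.card_univ, Fintype.card_fin] at hle
    rw [hsum] at hle
    omega
  have hii : 3 * N ≤ (∏ m, k m) + 2 * BB.card := by
    have key : ∀ z : Fin N, 3 ≤ (F z).card + (if (F z).card ≤ 2 then 2 else 0) := by
      intro z
      have := hcard1 z
      split_ifs with h <;> omega
    have hle : ∑ _z : Fin N, (3:ℕ) ≤ ∑ z, ((F z).card + if (F z).card ≤ 2 then 2 else 0) :=
      Finset.sum_le_sum (fun z _ => key z)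
    have hbool : ∑ z : Fin N, (if (F z).card ≤ 2 then (2:ℕ) else 0) = 2 * BB.card := by
      rw [hBB, Finset.card_filter, Finset.mul_sum]
      apply Finset.sum_congr rfl
      intro z _
      split <;> simp
    rw [Finset.sum_add_distrib, hbool, Finset.sum_const] at hle
    simp only [smul_eq_mul, Finset.card_univ, Fintype.card_fin] at hle
    rw [hsum] at hle
    omega
  have hs3 : 3 ≤ SS.card := by omega
  obtain ⟨u, v, w, hu, hv, hw, huv, huw, hvw⟩ :=
    Finset.two_lt_card_iff.mp (show 2 < SS.card by omega)
  rw [hSS, Finset.mem_filter] at hu hv hw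
  obtain ⟨a, ha⟩ := Finset.card_eq_one.mp hu.2
  obtain ⟨b0, hb⟩ := Finset.card_eq_one.mp hv.2
  obtain ⟨c0, hc⟩ := Finset.card_eq_one.mp hw.2
  obtain ⟨b1, hb1mem, m, hm_ne, hm_eq⟩ :=
    hdist u v a huv ha (by rw [hb]; simp)
  rw [hb, Finset.mem_singleton] at hb1mem
  subst hb1mem
  obtain ⟨c1, hc1mem, m₂, hm₂ne, hm₂eq⟩ :=
    hdist u w a huw ha (by rw [hc]; simp)
  rw [hc, Finset.mem_singleton] at hc1mem
  subst hc1mem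
  obtain ⟨c2, hc2mem, m₃, hm₃ne, hm₃eq⟩ :=
    hdist v w b1 hvw hb (by rw [hc]; simp)
  rw [hc, Finset.mem_singleton] at hc2mem
  subst hc2mem
  -- m₂ = m
  have hm2m : m₂ = m := by
    by_contra hne
    have hbm : b1 m ≠ c2 m := by
      have h1 : a m = c2 m := hm₂eq m (fun h => hne h.symm)
      rw [← h1]
      exact fun h => hm_ne h.symm
    have hbm2 : b1 m₂ ≠ c2 m₂ := by
      have h1 : a m₂ = b1 m₂ := hm_eq m₂ hne
      rw [← h1]
      exact hm₂ne
    have e1 : m = m₃ := by by_contra h; exact hbm (hm₃eq m h)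
    have e2 : m₂ = m₃ := by by_contra h; exact hbm2 (hm₃eq m₂ h)
    exact hne (e2.trans e1.symm)
  have hbl : ∀ j, j ≠ m → b1 j = a j := fun j hj => (hm_eq j hj).symm
  have hcl : ∀ j, j ≠ m → c2 j = a j := fun j hj => (hm₂eq j (by rw [hm2m]; exact hj)).symm
  have hab : a m ≠ b1 m := hm_ne
  have hac : a m ≠ c2 m := by
    intro h
    exact hm₂ne (by rw [hm2m]; exact h)
  have hbc : b1 m ≠ c2 m := by
    have hm3m : m₃ = m := by
      by_contra h
      exact hm₃ne ((hbl m₃ h).trans (hcl m₃ h).symm)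
    rw [← hm3m]; exact hm₃ne
  -- line membership for all small classes
  have hline : ∀ z : Fin N, (F z).card ≤ 2 → ∃ β ∈ F z, ∀ j, j ≠ m → β j = a j := by
    intro z hz
    by_cases hzu : z = u
    · exact ⟨a, by rw [hzu, ha]; simp, fun j _ => rfl⟩
    by_cases hzv : z = v
    · exact ⟨b1, by rw [hzv, hb]; simp, hbl⟩
    by_cases hzw : z = w
    · exact ⟨c2, by rw [hzw, hc]; simp, hcl⟩
    obtain ⟨β₁, hβ₁mem, j₁, hj₁ne, hj₁eq⟩ := hdist u z a (fun h => hzu h.symm) ha hz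
    by_cases h1 : j₁ = m
    · exact ⟨β₁, hβ₁mem, fun j hj => (hj₁eq j (h1 ▸ hj)).symm⟩
    obtain ⟨β₂, hβ₂mem, j₂, hj₂ne, hj₂eq⟩ := hdist v z b1 (fun h => hzv h.symm) hb hz
    by_cases h2 : j₂ = m
    · exact ⟨β₂, hβ₂mem, fun j hj =>
        ((hj₂eq j (h2 ▸ hj)).symm).trans (hbl j hj)⟩
    obtain ⟨β₃, hβ₃mem, j₃, hj₃ne, hj₃eq⟩ := hdist w z c2 (fun h => hzw h.symm) hc hz
    by_cases h3 : j₃ = m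
    · exact ⟨β₃, hβ₃mem, fun j hj =>
        ((hj₃eq j (h3 ▸ hj)).symm).trans (hcl j hj)⟩
    exfalso
    have p1 : a m = β₁ m := hj₁eq m (fun h => h1 h.symm)
    have p2 : b1 m = β₂ m := hj₂eq m (fun h => h2 h.symm)
    have p3 : c2 m = β₃ m := hj₃eq m (fun h => h3 h.symm)
    by_cases e12 : β₁ = β₂
    · exact hab (by rw [p1, p2, e12])
    by_cases e13 : β₁ = β₃
    · exact hac (by rw [p1, p3, e13])
    by_cases e23 : β₂ = β₃
    · exact hbc (by rw [p2, p3, e23])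
    have hc3 : ({β₁, β₂, β₃} : Finset (∀ m, Fin (k m))).card = 3 := by
      rw [Finset.card_insert_of_notMem (by simp [e12, e13]),
        Finset.card_insert_of_notMem (by simp [e23]), Finset.card_singleton]
    have hsub : ({β₁, β₂, β₃} : Finset (∀ m, Fin (k m))) ⊆ F z := by
      intro x hx
      simp only [Finset.mem_insert, Finset.mem_singleton] at hx
      rcases hx with rfl | rfl | rfl
      exacts [hβ₁mem, hβ₂mem, hβ₃mem]
    have := Finset.card_le_card hsub
    omega
  -- injection into Fin (k m)
  have hBk : BB.card ≤ k m := by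
    have hchoice : ∀ z : Fin N, ∃ β : (∀ m, Fin (k m)),
        (F z).card ≤ 2 → (β ∈ F z ∧ ∀ j, j ≠ m → β j = a j) := by
      intro z
      by_cases hz : (F z).card ≤ 2
      · obtain ⟨β, h1, h2⟩ := hline z hz
        exact ⟨β, fun _ => ⟨h1, h2⟩⟩
      · exact ⟨a, fun h => absurd h hz⟩
    choose bt hbt using hchoice
    have hle : BB.card ≤ (Finset.univ : Finset (Fin (k m))).card := by
      apply Finset.card_le_card_of_injOn (fun z => bt z m) (fun _ _ => Finset.mem_univ _)
      intro z hz z' hz' heq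
      have hz2 : (F z).card ≤ 2 := (Finset.mem_filter.mp (Finset.mem_coe.mp hz)).2
      have hz2' : (F z').card ≤ 2 := (Finset.mem_filter.mp (Finset.mem_coe.mp hz')).2
      have h1 := hbt z hz2
      have h2 := hbt z' hz2'
      have hbteq : bt z = bt z' := by
        funext j
        by_cases hj : j = m
        · rw [hj]; exact heq
        · rw [h1.2 j hj, h2.2 j hj]
      have e1 : ψ (bt z) = z := (hmemF z (bt z)).mp h1.1
      have e2 : ψ (bt z') = z' := (hmemF z' (bt z')).mp h2.1
      rw [← e1, ← e2, hbteq]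
    simpa using hle
  have hkm : k m ≤ Finset.univ.sup k := Finset.le_sup (Finset.mem_univ m)
  have hsB : SS.card ≤ BB.card := by
    apply Finset.card_le_card
    intro z hz
    rw [hSS, Finset.mem_filter] at hz
    rw [hBB, Finset.mem_filter]
    exact ⟨hz.1, by omega⟩
  have h2km := hk m
  omega

/-- RT¹_N ≰_W ∏_{m ≤ n} RT¹_{k_m} when 2N > 2 + ∏ k_m and
3N > 3(max k_m − 1) + ∏ k_m, for continuous forward maps and a finite backward map. -/
theorem stmt3 (n N : ℕ) (hn : 1 ≤ n) (k : Fin (n + 1) → ℕ) (hk : ∀ m, 2 ≤ k m)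
    (hN1 : 2 + ∏ m, k m < 2 * N)
    (hN2 : 3 * (Finset.univ.sup k - 1) + ∏ m, k m < 3 * N) :
    ¬ ∃ (Φ : ∀ m : Fin (n + 1), (ℕ → Fin N) → (ℕ → Fin (k m)))
        (ψ : (∀ m, Fin (k m)) → Fin N),
      (∀ m, Continuous (Φ m)) ∧
      ∀ (c : ℕ → Fin N) (a : ∀ m, Fin (k m)),
        (∀ m, {x | Φ m c x = a m}.Infinite) →
        {x | c x = ψ a}.Infinite := by
  rintro ⟨Φ, ψ, hΦ, hψ⟩
  exact combo hk hN1 hN2 ψ (fun v w => pair_aux Φ ψ hΦ hψ v w)
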